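/- Let f : ℝ^n → ℝ be a convex polynomial that is coercive on ℝ^n, and suppose there exist x ≠ y in ℝ^n and t₀ ∈ (0,1) with f((1−t₀)x + t₀y) = (1−t₀)f(x) + t₀f(y). Then a contradiction follows; that is, a coercive convex polynomial is strictly convex. -/

import Mathlib

private lemma poly_line_eval {n : ℕ} (p : MvPolynomial (Fin n) ℝ) (x y : Fin n → ℝ) (t : ℝ) :
    Polynomial.eval t (MvPolynomial.aeval (fun i => Polynomial.C (x i) + Polynomial.C (y i - x i) * Polynomial.X) p)
      = MvPolynomial.eval (fun i => (1 - t) * x i + t * y i) p := by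
  induction p using MvPolynomial.induction_on with
  | C a => simp only [MvPolynomial.aeval_C, MvPolynomial.eval_C]; simp
  | add p q hp hq => simp only [map_add, Polynomial.eval_add, hp, hq]
  | mul_X p i hp =>
      simp only [map_mul, MvPolynomial.aeval_X, Polynomial.eval_mul, Polynomial.eval_add,
        Polynomial.eval_C, Polynomial.eval_X, MvPolynomial.eval_mul, MvPolynomial.eval_X, hp]
      ring



/-- A coercive convex polynomial is strictly convex: equality in the convexity inequality
at an interior parameter for distinct points yields a contradiction. -/
theorem coercive_convex_poly_strictConvex {n : ℕ}
    (p : MvPolynomial (Fin n) ℝ) (f : (Fin n → ℝ) → ℝ)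
    (hf : ∀ x, f x = MvPolynomial.eval x p)
    (hconv : ConvexOn ℝ Set.univ f)
    (hcoer : Filter.Tendsto f (Filter.cocompact (Fin n → ℝ)) Filter.atTop)
    (x y : Fin n → ℝ) (hxy : x ≠ y) (t₀ : ℝ) (ht₀ : t₀ ∈ Set.Ioo (0 : ℝ) 1)
    (heq : f ((1 - t₀) • x + t₀ • y) = (1 - t₀) * f x + t₀ * f y) :
    False := by
  obtain ⟨ht0, ht1⟩ := ht₀
  set g : ℝ → ℝ := fun t => f ((1 - t) • x + t • y) with hg
  have hg0 : g 0 = f x := by simp [hg]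
  have hg1 : g 1 = f y := by simp [hg]
  set a := f x with ha
  set b := f y with hb
  -- convexity along the line
  have L1 : ∀ u v s : ℝ, 0 ≤ s → s ≤ 1 →
      g ((1 - s) * u + s * v) ≤ (1 - s) * g u + s * g v := by
    intro u v s hs0 hs1
    have hvec : (1 - ((1 - s) * u + s * v)) • x + ((1 - s) * u + s * v) • y
        = (1 - s) • ((1 - u) • x + u • y) + s • ((1 - v) • x + v • y) := by
      module
    have := hconv.2 (Set.mem_univ ((1 - u) • x + u • y)) (Set.mem_univ ((1 - v) • x + v • y))
      (by linarith : (0:ℝ) ≤ 1 - s) hs0 (by ring)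
    simpa [hg, hvec, smul_eq_mul] using this
  have heq' : g t₀ = (1 - t₀) * a + t₀ * b := by
    simpa [hg, ha, hb] using heq
  -- g is affine on [0,1]
  have L2 : ∀ t ∈ Set.Icc (0:ℝ) 1, g t = (1 - t) * a + t * b := by
    intro t ⟨htl, htr⟩
    have hup : g t ≤ (1 - t) * a + t * b := by
      have := L1 0 1 t htl htr
      simpa [hg0, hg1] using this
    have hlow : (1 - t) * a + t * b ≤ g t := by
      rcases le_or_gt t t₀ with hc | hc
      · have h1t : (0:ℝ) < 1 - t := by linarith
        set s := (t₀ - t) / (1 - t) with hs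
        have hs0 : 0 ≤ s := div_nonneg (by linarith) (by linarith)
        have hs1 : s < 1 := (div_lt_one h1t).2 (by linarith)
        have hkey : (1 - s) * t + s * 1 = t₀ := by
          have hsm : s * (1 - t) = t₀ - t := by rw [hs]; exact div_mul_cancel₀ _ h1t.ne'
          linear_combination hsm
        have h1 : g t₀ ≤ (1 - s) * g t + s * g 1 := by
          rw [← hkey]; exact L1 t 1 s hs0 hs1.le
        rw [heq', hg1] at h1
        have hs1' : (0:ℝ) < 1 - s := by linarith
        have hfac : (1 - s) * (1 - t) = 1 - t₀ := by
          have hsm : s * (1 - t) = t₀ - t := by rw [hs]; exact div_mul_cancel₀ _ h1t.ne'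
          linear_combination (-1 : ℝ) * hsm
        have h' : (1 - s) * t = t₀ - s := by linarith [hkey]
        have e1 : (1 - s) * ((1 - t) * a + t * b) = (1 - t₀) * a + (t₀ - s) * b := by
          calc (1 - s) * ((1 - t) * a + t * b)
              = ((1 - s) * (1 - t)) * a + ((1 - s) * t) * b := by ring
            _ = (1 - t₀) * a + (t₀ - s) * b := by rw [hfac, h']
        have h2 : (1 - s) * ((1 - t) * a + t * b) ≤ (1 - s) * g t := by
          rw [e1]; linarith
        exact le_of_mul_le_mul_left h2 hs1'
      · have ht0' : (0:ℝ) < t := lt_trans ht0 hc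
        set s := t₀ / t with hs
        have hs0 : 0 < s := div_pos ht0 ht0'
        have hs1 : s ≤ 1 := (div_le_one ht0').2 hc.le
        have hkey : (1 - s) * 0 + s * t = t₀ := by
          have hsm : s * t = t₀ := by rw [hs]; exact div_mul_cancel₀ _ ht0'.ne'
          linear_combination hsm
        have h1 : g t₀ ≤ (1 - s) * g 0 + s * g t := by
          rw [← hkey]; exact L1 0 t s hs0.le hs1
        rw [heq', hg0] at h1
        have hst : s * t = t₀ := by rw [hs]; exact div_mul_cancel₀ _ ht0'.ne'
        have e2 : s * ((1 - t) * a + t * b) = (s - t₀) * a + t₀ * b := by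
          calc s * ((1 - t) * a + t * b) = s * a - (s * t) * a + (s * t) * b := by ring
            _ = (s - t₀) * a + t₀ * b := by rw [hst]; ring
        have h2 : s * ((1 - t) * a + t * b) ≤ s * g t := by
          rw [e2]; linarith
        exact le_of_mul_le_mul_left h2 hs0
    linarith
  -- the polynomial along the line
  set q : Polynomial ℝ :=
    MvPolynomial.aeval (fun i => Polynomial.C (x i) + Polynomial.C (y i - x i) * Polynomial.X) p
    with hq
  have hqe : ∀ t : ℝ, Polynomial.eval t q = g t := by
    intro t
    have hpt : (fun i => (1 - t) * x i + t * y i) = (1 - t) • x + t • y := by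
      funext i; simp
    rw [hq, poly_line_eval, hpt, ← hf]
  -- q agrees with the affine polynomial on [0,1], hence everywhere
  have hqr : q = Polynomial.C a + Polynomial.C (b - a) * Polynomial.X := by
    apply Polynomial.eq_of_infinite_eval_eq
    have hsub : Set.Icc (0:ℝ) 1 ⊆
        {t | Polynomial.eval t q
          = Polynomial.eval t (Polynomial.C a + Polynomial.C (b - a) * Polynomial.X)} := by
      intro t ht
      simp only [Set.mem_setOf_eq, Polynomial.eval_add, Polynomial.eval_C, Polynomial.eval_mul,
        Polynomial.eval_X, hqe t, L2 t ht]
      ring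
    exact (Set.Icc_infinite (by norm_num)).mono hsub
  have hlin : ∀ t : ℝ, g t = a + t * (b - a) := by
    intro t
    rw [← hqe t, hqr]
    simp [mul_comm]
  -- coercivity contradiction
  have hne : y - x ≠ 0 := sub_ne_zero.2 (Ne.symm hxy)
  have hnorm : (0:ℝ) < ‖y - x‖ := norm_pos_iff.2 hne
  have hev : ∀ᶠ z in Filter.cocompact (Fin n → ℝ), a + 1 ≤ f z :=
    hcoer.eventually (Filter.eventually_ge_atTop (a + 1))
  obtain ⟨K, hK, hKs⟩ := Filter.mem_cocompact.mp hev
  obtain ⟨R, hR⟩ := hK.isBounded.exists_norm_le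
  have hline : ∀ t : ℝ, |t| * ‖y - x‖ - ‖x‖ ≤ ‖(1 - t) • x + t • y‖ := by
    intro t
    have h1 : (1 - t) • x + t • y = x + t • (y - x) := by module
    have h2 : ‖t • (y - x)‖ ≤ ‖x + t • (y - x)‖ + ‖x‖ := by
      have := norm_sub_le (x + t • (y - x)) x
      simpa using this
    rw [h1]
    rw [norm_smul] at h2
    simp only [Real.norm_eq_abs] at h2
    linarith
  set T : ℝ := (|R| + ‖x‖ + 1) / ‖y - x‖ with hT
  have hTpos : 0 < T := div_pos (by positivity) hnorm
  have hTnorm : ∀ t : ℝ, |t| = T → R < ‖(1 - t) • x + t • y‖ := by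
    intro t ht
    have h := hline t
    rw [ht, hT] at h
    have hdiv : (|R| + ‖x‖ + 1) / ‖y - x‖ * ‖y - x‖ = |R| + ‖x‖ + 1 := by
      field_simp
    rw [hdiv] at h
    have := abs_nonneg R
    have := le_abs_self R
    linarith
  -- choose the direction in which the affine function does not increase
  rcases le_or_gt b a with hba | hba
  · -- t = T
    have hfv : g T ≤ a := by
      rw [hlin T]; nlinarith
    have hnK : (1 - T) • x + T • y ∉ K := by
      intro hmem
      exact absurd (hR _ hmem) (not_le.2 (hTnorm T (abs_of_pos hTpos)))
    have h2 : a + 1 ≤ f ((1 - T) • x + T • y) := hKs hnK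
    have h3 : g T = f ((1 - T) • x + T • y) := rfl
    linarith [h3 ▸ hfv]
  · -- t = -T
    have hfv : g (-T) ≤ a := by
      rw [hlin (-T)]; nlinarith
    have hnK : (1 - (-T)) • x + (-T) • y ∉ K := by
      intro hmem
      exact absurd (hR _ hmem) (not_le.2 (hTnorm (-T) (by rw [abs_neg, abs_of_pos hTpos])))
    have h2 : a + 1 ≤ f ((1 - (-T)) • x + (-T) • y) := hKs hnK
    have h3 : g (-T) = f ((1 - (-T)) • x + (-T) • y) := rfl
    linarith [h3 ▸ hfv]
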